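/- Let F(X) = f(λ(X)) be a Schur-convex spectral function on n×n real symmetric matrices, let A, B be symmetric, and let X̄ be a symmetric matrix with λ(X̄) = λ(B) such that A and X̄ strongly commute. Then X̄ is a global minimizer of F(X − A) over the set {X symmetric : λ(X) = λ(B)}. -/

import Mathlib

open Finset

/-- Decreasing rearrangement of a vector in ℝⁿ. -/
noncomputable def dsort {n : ℕ} (u : Fin n → ℝ) : Fin n → ℝ :=
  u ∘ Tuple.sort (fun i => -u i)

/-- `Maj u v` : `u` is majorized by `v`. -/
def Maj {n : ℕ} (u v : Fin n → ℝ) : Prop :=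
  (∀ k : ℕ, ∑ i ∈ univ.filter (fun i : Fin n => (i : ℕ) < k), dsort u i ≤
      ∑ i ∈ univ.filter (fun i : Fin n => (i : ℕ) < k), dsort v i) ∧
  ∑ i, u i = ∑ i, v i

open Matrix

/-- Decreasingly ordered eigenvalue vector of a real symmetric matrix. -/
noncomputable def specVec {n : ℕ} {A : Matrix (Fin n) (Fin n) ℝ} (hA : A.IsHermitian) :
    Fin n → ℝ :=
  dsort hA.eigenvalues

/-- `A` and `B` strongly commute: a common orthonormal eigenbasis realizing both
decreasingly ordered spectra simultaneously. -/
def StrongCommute {n : ℕ} {A B : Matrix (Fin n) (Fin n) ℝ}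
    (hA : A.IsHermitian) (hB : B.IsHermitian) : Prop :=
  ∃ U : Matrix (Fin n) (Fin n) ℝ, U * Uᵀ = 1 ∧
    Uᵀ * A * U = Matrix.diagonal (specVec hA) ∧
    Uᵀ * B * U = Matrix.diagonal (specVec hB)

namespace SpecAux
open Polynomial
variable {n : ℕ}



lemma dsort_antitone (u : Fin n → ℝ) : Antitone (dsort u) := by
  have h := Tuple.monotone_sort (fun i => - u i)
  intro i j hij
  have := h hij
  simp only [Function.comp_apply] at this
  simpa [dsort] using this

lemma multiset_map_comp_perm (w : Fin n → ℝ) (σ : Equiv.Perm (Fin n)) :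
    Multiset.map (w ∘ σ) Finset.univ.val = Multiset.map w Finset.univ.val := by
  have : Multiset.map (⇑σ) Finset.univ.val = Finset.univ.val := by
    have := Finset.map_univ_equiv σ
    rw [← this]
    simp [Finset.map_val]
  calc Multiset.map (w ∘ σ) Finset.univ.val
      = Multiset.map w (Multiset.map (⇑σ) Finset.univ.val) := by
        rw [Multiset.map_map]
    _ = Multiset.map w Finset.univ.val := by rw [this]

lemma multiset_dsort (w : Fin n → ℝ) :
    ((List.ofFn (dsort w)) : Multiset ℝ) = Multiset.map w Finset.univ.val := by
  rw [List.ofFn_eq_map]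
  have h1 : ((List.map (dsort w) (List.finRange n) : List ℝ) : Multiset ℝ)
      = Multiset.map (dsort w) Finset.univ.val := by
    rfl
  rw [h1]
  exact multiset_map_comp_perm w _

lemma dsort_eq_of_multiset {u v : Fin n → ℝ}
    (h : Multiset.map u Finset.univ.val = Multiset.map v Finset.univ.val) :
    dsort u = dsort v := by
  have hperm : (List.ofFn (dsort u)).Perm (List.ofFn (dsort v)) := by
    rw [← Multiset.coe_eq_coe, multiset_dsort, multiset_dsort, h]
  have hs : ∀ w : Fin n → ℝ, (List.ofFn (dsort w)).Pairwise (· ≥ ·) := by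
    intro w
    rw [List.pairwise_ofFn]
    intro i j hij
    exact dsort_antitone w hij.le
  have : List.ofFn (dsort u) = List.ofFn (dsort v) :=
    List.Perm.eq_of_pairwise (fun a b _ _ h1 h2 => le_antisymm h2 h1) (hs u) (hs v) hperm
  exact List.ofFn_injective this

lemma dsort_comp_perm (u : Fin n → ℝ) (σ : Equiv.Perm (Fin n)) :
    dsort (u ∘ σ) = dsort u :=
  dsort_eq_of_multiset (multiset_map_comp_perm u σ)

lemma dsort_dsort (u : Fin n → ℝ) : dsort (dsort u) = dsort u :=
  dsort_comp_perm u _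

lemma dsort_add_const (u : Fin n → ℝ) (c : ℝ) :
    dsort (fun i => u i + c) = fun i => dsort u i + c := by
  have h1 : Antitone (dsort (fun i => u i + c)) := dsort_antitone _
  have h2 : Antitone (fun i => dsort u i + c) := fun i j hij => by
    simpa using dsort_antitone u hij
  have hm : Multiset.map (dsort (fun i => u i + c)) Finset.univ.val
      = Multiset.map (fun i => dsort u i + c) Finset.univ.val := by
    have a1 : Multiset.map (dsort (fun i => u i + c)) Finset.univ.val
        = Multiset.map (fun i => u i + c) Finset.univ.val :=
      multiset_map_comp_perm _ _
    have a2 : Multiset.map (fun i => dsort u i + c) Finset.univ.val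
        = Multiset.map (fun i => u i + c) Finset.univ.val := by
      have : (fun i => dsort u i + c) = (fun i => u i + c) ∘ (Tuple.sort (fun i => -u i)) := rfl
      rw [this]
      exact multiset_map_comp_perm _ _
    rw [a1, a2]
  -- both antitone with same multiset: use dsort_eq_of_multiset and idempotence-like argument
  have key := dsort_eq_of_multiset hm
  -- dsort of an antitone function is itself
  have fix : ∀ w : Fin n → ℝ, Antitone w → dsort w = w := by
    intro w hw
    have : Monotone ((fun i => -w i) ∘ Equiv.refl (Fin n)) := by
      intro i j hij
      simpa using hw hij
    have := Tuple.comp_sort_eq_comp_iff_monotone (f := fun i => -w i)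
      (σ := Equiv.refl (Fin n)) |>.mpr this
    funext i
    have h' := congrFun this i
    simp only [Function.comp_apply, Equiv.refl_apply] at h'
    exact (neg_injective h'.symm : _)
  rw [fix _ h1, fix _ h2] at key
  exact key

lemma sum_dsort (u : Fin n → ℝ) : ∑ i, dsort u i = ∑ i, u i :=
  Equiv.sum_comp _ u



lemma det_shift (M V : Matrix (Fin n) (Fin n) ℝ) (w : Fin n → ℝ)
    (hV : V * Vᵀ = 1) (hMV : M = V * Matrix.diagonal w * Vᵀ) (x : ℝ) :
    (x • (1 : Matrix (Fin n) (Fin n) ℝ) - M).det = ∏ i, (x - w i) := by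
  have h1 : x • (1 : Matrix (Fin n) (Fin n) ℝ) - M
      = V * (Matrix.diagonal (fun i => x - w i)) * Vᵀ := by
    have : Matrix.diagonal (fun i => x - w i)
        = x • (1 : Matrix (Fin n) (Fin n) ℝ) - Matrix.diagonal w := by
      ext i j
      by_cases h : i = j <;>
        simp [h, Matrix.diagonal_apply, Matrix.one_apply, Matrix.sub_apply, Matrix.smul_apply]
    rw [this, hMV]
    rw [Matrix.mul_sub, Matrix.sub_mul, Matrix.mul_smul, Matrix.smul_mul, mul_one, hV]
  rw [h1, Matrix.det_mul, Matrix.det_mul, mul_comm, ← mul_assoc, ← Matrix.det_mul]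
  have : Vᵀ * V = 1 := mul_eq_one_comm.mp hV
  rw [this, Matrix.det_one, one_mul, Matrix.det_diagonal]

lemma prod_eq_multiset {w v : Fin n → ℝ}
    (h : ∀ x : ℝ, ∏ i, (x - w i) = ∏ i, (x - v i)) :
    Multiset.map w Finset.univ.val = Multiset.map v Finset.univ.val := by
  have key : ∀ u : Fin n → ℝ, (∏ i, (X - C (u i)) : Polynomial ℝ).roots
      = Multiset.map u Finset.univ.val := by
    intro u
    have : (∏ i, (X - C (u i)) : Polynomial ℝ)
        = (Multiset.map (fun a => X - C a) (Multiset.map u Finset.univ.val)).prod := by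
      rw [Multiset.map_map]
      rfl
    rw [this, Polynomial.roots_multiset_prod_X_sub_C]
  have hpq : (∏ i, (X - C (w i)) : Polynomial ℝ) = ∏ i, (X - C (v i)) := by
    apply Polynomial.funext
    intro x
    simp only [eval_prod, eval_sub, eval_X, eval_C]
    exact h x
  rw [← key w, ← key v, hpq]

/-- If `M = V * diagonal w * Vᵀ` with `V` real orthogonal, then the eigenvalue multiset of `M`
is the multiset of `w`. -/
lemma multiset_eigs {M : Matrix (Fin n) (Fin n) ℝ} (hM : M.IsHermitian)
    (V : Matrix (Fin n) (Fin n) ℝ) (w : Fin n → ℝ)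
    (hV : V * Vᵀ = 1) (hMV : M = V * Matrix.diagonal w * Vᵀ) :
    Multiset.map hM.eigenvalues Finset.univ.val = Multiset.map w Finset.univ.val := by
  have hspec := hM.spectral_theorem
  set V' : Matrix (Fin n) (Fin n) ℝ := (hM.eigenvectorUnitary : Matrix (Fin n) (Fin n) ℝ)
  have hstar : star V' = V'ᵀ := by
    rw [Matrix.star_eq_conjTranspose, Matrix.conjTranspose_eq_transpose_of_trivial]
  have hV' : V' * V'ᵀ = 1 := by
    rw [← hstar]
    exact (Matrix.mem_unitaryGroup_iff).mp hM.eigenvectorUnitary.2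
  have hMV' : M = V' * Matrix.diagonal hM.eigenvalues * V'ᵀ := by
    rw [← hstar]
    rw [Unitary.conjStarAlgAut_apply] at hspec
    exact hspec
  apply prod_eq_multiset
  intro x
  rw [← det_shift M V' hM.eigenvalues hV' hMV' x, ← det_shift M V w hV hMV x]


local notation "⟪" x ", " y "⟫" => @inner ℝ _ _ x y

lemma toEuclideanLin_eigen {M : Matrix (Fin n) (Fin n) ℝ} (hM : M.IsHermitian) (j : Fin n) :
    Matrix.toEuclideanLin M (hM.eigenvectorBasis j)
      = hM.eigenvalues j • hM.eigenvectorBasis j := by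
  have h := hM.mulVec_eigenvectorBasis j
  apply (WithLp.equiv 2 (Fin n → ℝ)).injective
  show M *ᵥ (hM.eigenvectorBasis j).ofLp = hM.eigenvalues j • (hM.eigenvectorBasis j).ofLp
  exact h

lemma quad_expand {M : Matrix (Fin n) (Fin n) ℝ} (hM : M.IsHermitian)
    (x : EuclideanSpace ℝ (Fin n)) :
    ⟪x, Matrix.toEuclideanLin M x⟫
      = ∑ i, hM.eigenvalues i * (hM.eigenvectorBasis.repr x i)^2 := by
  set b := hM.eigenvectorBasis with hb
  set c : Fin n → ℝ := fun i => b.repr x i with hc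
  have hx : ∑ i, c i • b i = x := b.sum_repr x
  have hT : Matrix.toEuclideanLin M x = ∑ i, (c i * hM.eigenvalues i) • b i := by
    conv_lhs => rw [← hx]
    rw [map_sum]
    congr 1
    funext i
    rw [LinearMap.map_smul, toEuclideanLin_eigen hM i, smul_smul]
  rw [hT, inner_sum]
  congr 1
  funext i
  rw [real_inner_smul_right, real_inner_comm, ← OrthonormalBasis.repr_apply_apply]
  ring

lemma inner_self_expand {M : Matrix (Fin n) (Fin n) ℝ} (hM : M.IsHermitian)
    (x : EuclideanSpace ℝ (Fin n)) :
    ⟪x, x⟫ = ∑ i, (hM.eigenvectorBasis.repr x i)^2 := by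
  set b := hM.eigenvectorBasis with hb
  set c : Fin n → ℝ := fun i => b.repr x i with hc
  have hx : ∑ i, c i • b i = x := b.sum_repr x
  calc ⟪x, x⟫ = ⟪(∑ i, c i • b i), x⟫ := by rw [hx]
    _ = ∑ i, c i * ⟪b i, x⟫ := by
        rw [sum_inner]
        congr 1
        funext i
        rw [real_inner_smul_left]
    _ = ∑ i, (b.repr x i)^2 := by
        congr 1
        funext i
        rw [← OrthonormalBasis.repr_apply_apply]
        ring

lemma repr_eq_zero_of_span {S : Finset (Fin n)}
    {M : Matrix (Fin n) (Fin n) ℝ} (hM : M.IsHermitian)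
    {x : EuclideanSpace ℝ (Fin n)}
    (hx : x ∈ Submodule.span ℝ (hM.eigenvectorBasis '' ↑S))
    {i : Fin n} (hi : i ∉ S) : hM.eigenvectorBasis.repr x i = 0 := by
  induction hx using Submodule.span_induction with
  | mem y hy =>
      obtain ⟨j, hj, rfl⟩ := hy
      rw [OrthonormalBasis.repr_self]
      have : j ≠ i := fun h => hi (h ▸ hj)
      rw [EuclideanSpace.single_apply, if_neg (fun h => this h.symm)]
  | zero => simp
  | add y z _ _ hy hz => rw [map_add]; simp [hy, hz]
  | smul a y _ hy =>
      rw [LinearIsometryEquiv.map_smul]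
      simp [hy]

lemma finrank_span_image {S : Finset (Fin n)}
    {M : Matrix (Fin n) (Fin n) ℝ} (hM : M.IsHermitian) :
    Module.finrank ℝ (Submodule.span ℝ (hM.eigenvectorBasis '' ↑S)) = S.card := by
  set b := hM.eigenvectorBasis with hb
  have hli : LinearIndependent ℝ (fun i : S => b i) :=
    b.orthonormal.linearIndependent.comp Subtype.val Subtype.val_injective
  have himg : Set.range (fun i : S => b i) = b '' ↑S := by
    ext y; simp
  rw [← himg, finrank_span_eq_card hli, Fintype.card_coe]

lemma exists_mem_both {V W : Submodule ℝ (EuclideanSpace ℝ (Fin n))}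
    (h : n < Module.finrank ℝ V + Module.finrank ℝ W) :
    ∃ x, x ∈ V ∧ x ∈ W ∧ x ≠ 0 := by
  have hsum := Submodule.finrank_sup_add_finrank_inf_eq V W
  have hsup : Module.finrank ℝ ↥(V ⊔ W) ≤ n := by
    have := Submodule.finrank_le (V ⊔ W)
    rwa [finrank_euclideanSpace, Fintype.card_fin] at this
  have hpos : V ⊓ W ≠ ⊥ := by
    intro hbot
    rw [hbot, finrank_bot] at hsum
    omega
  obtain ⟨x, hx, hx0⟩ := Submodule.exists_mem_ne_zero_of_ne_bot hpos
  exact ⟨x, hx.1, hx.2, hx0⟩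

/-- Weyl monotonicity: if `N - M` is PSD, the sorted eigenvalues dominate. -/
lemma weyl {M N : Matrix (Fin n) (Fin n) ℝ} (hM : M.IsHermitian) (hN : N.IsHermitian)
    (hMN : (N - M).PosSemidef) (k : Fin n) :
    dsort hM.eigenvalues k ≤ dsort hN.eigenvalues k := by
  classical
  set σM := Tuple.sort (fun i => -(hM.eigenvalues i)) with hσM
  set σN := Tuple.sort (fun i => -(hN.eigenvalues i)) with hσN
  set S : Finset (Fin n) := (Finset.Iic k).image σM with hS
  set T : Finset (Fin n) := (Finset.Ici k).image σN with hT
  have hcardS : S.card = (k : ℕ) + 1 := by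
    rw [hS, Finset.card_image_of_injective _ σM.injective, Fin.card_Iic]
  have hcardT : T.card = n - (k : ℕ) := by
    rw [hT, Finset.card_image_of_injective _ σN.injective, Fin.card_Ici]
  set V := Submodule.span ℝ (hM.eigenvectorBasis '' ↑S) with hV
  set W := Submodule.span ℝ (hN.eigenvectorBasis '' ↑T) with hW
  obtain ⟨x, hxV, hxW, hx0⟩ : ∃ x, x ∈ V ∧ x ∈ W ∧ x ≠ 0 := by
    apply exists_mem_both
    rw [hV, hW, finrank_span_image hM, finrank_span_image hN, hcardS, hcardT]
    have := k.isLt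
    omega
  set α := dsort hM.eigenvalues k with hα
  set β := dsort hN.eigenvalues k with hβ
  -- eigenvalue bounds on S and T
  have hSb : ∀ i ∈ S, α ≤ hM.eigenvalues i := by
    intro i hi
    rw [hS] at hi
    obtain ⟨j, hj, rfl⟩ := Finset.mem_image.mp hi
    rw [Finset.mem_Iic] at hj
    exact dsort_antitone hM.eigenvalues hj
  have hTb : ∀ i ∈ T, hN.eigenvalues i ≤ β := by
    intro i hi
    rw [hT] at hi
    obtain ⟨j, hj, rfl⟩ := Finset.mem_image.mp hi
    rw [Finset.mem_Ici] at hj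
    exact dsort_antitone hN.eigenvalues hj
  -- quadratic form bounds
  have hxx : (0:ℝ) < ⟪x, x⟫ := by
    have h0 : 0 < ‖x‖ := norm_pos_iff.mpr hx0
    rw [real_inner_self_eq_norm_sq]
    exact pow_pos h0 2
  have hQM : α * ⟪x, x⟫ ≤ ⟪x, Matrix.toEuclideanLin M x⟫ := by
    rw [quad_expand hM, inner_self_expand hM, Finset.mul_sum]
    apply Finset.sum_le_sum
    intro i _
    by_cases hi : i ∈ S
    · exact mul_le_mul_of_nonneg_right (hSb i hi) (sq_nonneg _)
    · rw [repr_eq_zero_of_span hM hxV hi]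
      simp
  have hQN : ⟪x, Matrix.toEuclideanLin N x⟫ ≤ β * ⟪x, x⟫ := by
    rw [quad_expand hN, inner_self_expand hN, Finset.mul_sum]
    apply Finset.sum_le_sum
    intro i _
    by_cases hi : i ∈ T
    · exact mul_le_mul_of_nonneg_right (hTb i hi) (sq_nonneg _)
    · rw [repr_eq_zero_of_span hN hxW hi]
      simp
  have hmid : ⟪x, Matrix.toEuclideanLin M x⟫ ≤ ⟪x, Matrix.toEuclideanLin N x⟫ := by
    have h1 : (0:ℝ) ≤ ⟪x, Matrix.toEuclideanLin (N - M) x⟫ := by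
      have h2 := hMN.dotProduct_mulVec_nonneg ((WithLp.equiv 2 (Fin n → ℝ)) x)
      have h3 : ⟪x, Matrix.toEuclideanLin (N - M) x⟫
          = star ((WithLp.equiv 2 (Fin n → ℝ)) x) ⬝ᵥ
            ((N - M) *ᵥ ((WithLp.equiv 2 (Fin n → ℝ)) x)) := by
        rw [EuclideanSpace.inner_eq_star_dotProduct, dotProduct_comm]; rfl
      rw [h3]
      exact h2
    have h4 : Matrix.toEuclideanLin (N - M) x
        = Matrix.toEuclideanLin N x - Matrix.toEuclideanLin M x := by
      rw [map_sub]
      rfl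
    rw [h4, inner_sub_right] at h1
    linarith
  have : α * ⟪x, x⟫ ≤ β * ⟪x, x⟫ := le_trans hQM (le_trans hmid hQN)
  exact le_of_mul_le_mul_right (by linarith [this]) hxx


lemma specVec_conj {M : Matrix (Fin n) (Fin n) ℝ} (hM : M.IsHermitian)
    (V : Matrix (Fin n) (Fin n) ℝ) (w : Fin n → ℝ)
    (hV : V * Vᵀ = 1) (hMV : M = V * Matrix.diagonal w * Vᵀ) :
    specVec hM = dsort w :=
  dsort_eq_of_multiset (multiset_eigs hM V w hV hMV)

lemma spectral_real {M : Matrix (Fin n) (Fin n) ℝ} (hM : M.IsHermitian) :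
    ∃ V : Matrix (Fin n) (Fin n) ℝ, V * Vᵀ = 1 ∧
      M = V * Matrix.diagonal hM.eigenvalues * Vᵀ := by
  set V' : Matrix (Fin n) (Fin n) ℝ := (hM.eigenvectorUnitary : Matrix (Fin n) (Fin n) ℝ)
  have hstar : star V' = V'ᵀ := by
    rw [Matrix.star_eq_conjTranspose, Matrix.conjTranspose_eq_transpose_of_trivial]
  have hV' : V' * V'ᵀ = 1 := by
    rw [← hstar]
    exact (Matrix.mem_unitaryGroup_iff).mp hM.eigenvectorUnitary.2
  refine ⟨V', hV', ?_⟩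
  have hspec := hM.spectral_theorem
  rw [← hstar]
  rw [Unitary.conjStarAlgAut_apply] at hspec
  exact hspec

lemma trace_eq_sum_eigs {M : Matrix (Fin n) (Fin n) ℝ} (hM : M.IsHermitian) :
    M.trace = ∑ i, hM.eigenvalues i := by
  obtain ⟨V, hV, hMV⟩ := spectral_real hM
  conv_lhs => rw [hMV]
  rw [Matrix.trace_mul_cycle, mul_eq_one_comm.mp hV,
    Matrix.one_mul, Matrix.trace_diagonal]

lemma filter_lt_card_eq (m : ℕ) (hm : m ≤ n) :
    (univ.filter (fun j : Fin n => (j : ℕ) < m)).card = m := by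
  have h : (univ.filter (fun j : Fin n => (j : ℕ) < m))
      = (univ : Finset (Fin m)).image (Fin.castLE hm) := by
    ext j
    simp only [Finset.mem_filter, Finset.mem_univ, true_and, Finset.mem_image]
    constructor
    · intro h
      refine ⟨⟨(j : ℕ), h⟩, ?_⟩
      apply Fin.ext
      rfl
    · rintro ⟨i, rfl⟩
      exact i.isLt
  rw [h, Finset.card_image_of_injective _ (Fin.castLE_injective hm), Finset.card_univ,
    Fintype.card_fin]

lemma filter_lt_card_filter (k : ℕ) :
    (univ.filter (fun j : Fin n =>
        (j : ℕ) < (univ.filter (fun j : Fin n => (j : ℕ) < k)).card))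
      = univ.filter (fun j : Fin n => (j : ℕ) < k) := by
  have h1 : (univ.filter (fun j : Fin n => (j : ℕ) < k))
      = univ.filter (fun j : Fin n => (j : ℕ) < min k n) := by
    ext j
    have := j.isLt
    simp only [Finset.mem_filter, Finset.mem_univ, true_and]
    omega
  rw [h1, filter_lt_card_eq (min k n) (min_le_right _ _)]

lemma diagonal_sub_smul_one (w : Fin n → ℝ) (c : ℝ) :
    Matrix.diagonal (fun i => w i - c)
      = Matrix.diagonal w - c • (1 : Matrix (Fin n) (Fin n) ℝ) := by
  ext i j
  by_cases h : i = j <;>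
    simp [h, Matrix.diagonal_apply, Matrix.one_apply, Matrix.sub_apply, Matrix.smul_apply]

lemma isHermitian_smul_one (c : ℝ) : (c • (1 : Matrix (Fin n) (Fin n) ℝ)).IsHermitian := by
  simp [Matrix.IsHermitian]

lemma spec_shift {M : Matrix (Fin n) (Fin n) ℝ} (hM : M.IsHermitian) (c : ℝ)
    (hM' : (M - c • 1).IsHermitian) :
    specVec hM' = fun i => specVec hM i - c := by
  obtain ⟨V, hV, hMV⟩ := spectral_real hM
  have h1 : M - c • 1 = V * Matrix.diagonal (fun i => hM.eigenvalues i - c) * Vᵀ := by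
    rw [diagonal_sub_smul_one, Matrix.mul_sub, Matrix.sub_mul, Matrix.mul_smul,
      Matrix.smul_mul, mul_one, hV, ← hMV]
  rw [specVec_conj hM' V _ hV h1]
  have h2 := dsort_add_const hM.eigenvalues (-c)
  have h3 : (fun i => hM.eigenvalues i - c) = (fun i => hM.eigenvalues i + (-c)) := by
    funext i; ring
  rw [h3, h2]
  funext i
  show dsort hM.eigenvalues i + (-c) = specVec hM i - c
  rw [specVec]; ring

lemma posPart_exists {C : Matrix (Fin n) (Fin n) ℝ} (hC : C.IsHermitian) :
    ∃ P : Matrix (Fin n) (Fin n) ℝ, P.IsHermitian ∧ (P - C).PosSemidef ∧ P.PosSemidef ∧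
      P.trace = ∑ i, max (hC.eigenvalues i) 0 := by
  obtain ⟨V, hV, hCV⟩ := spectral_real hC
  have hVstar : Vᵀ = Vᴴ := by
    rw [Matrix.conjTranspose_eq_transpose_of_trivial]
  set P := V * Matrix.diagonal (fun i => max (hC.eigenvalues i) 0) * Vᵀ with hP
  have hPpsd : P.PosSemidef := by
    rw [hP, hVstar]
    exact (Matrix.PosSemidef.diagonal (fun i => le_max_right _ _)).mul_mul_conjTranspose_same V
  have hPC : (P - C).PosSemidef := by
    have h1 : V * Matrix.diagonal (fun i => max (hC.eigenvalues i) 0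
        - hC.eigenvalues i) * Vᵀ = P - C := by
      rw [← Matrix.diagonal_sub, Matrix.mul_sub, Matrix.sub_mul, ← hCV, ← hP]
    rw [← h1, hVstar]
    exact (Matrix.PosSemidef.diagonal (fun i => by simp [le_max_left])).mul_mul_conjTranspose_same V
  refine ⟨P, hPpsd.isHermitian, hPC, hPpsd, ?_⟩
  rw [hP, Matrix.trace_mul_cycle, mul_eq_one_comm.mp hV,
    Matrix.one_mul, Matrix.trace_diagonal]

/-- Lidskii-type bound: any partial eigenvalue-difference sum over a set `S` is bounded by
the top `S.card` eigenvalues of the difference. -/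
lemma lidskii_core {A X : Matrix (Fin n) (Fin n) ℝ} (hA : A.IsHermitian) (hX : X.IsHermitian)
    (S : Finset (Fin n)) :
    ∑ i ∈ S, (specVec hX i - specVec hA i)
      ≤ ∑ j ∈ univ.filter (fun j : Fin n => (j : ℕ) < S.card), specVec (hX.sub hA) j := by
  classical
  rcases S.eq_empty_or_nonempty with rfl | hSne
  · simp
  set m := S.card with hm
  have hm1 : 1 ≤ m := Finset.card_pos.mpr hSne
  have hmn : m ≤ n := by
    have := Finset.card_le_univ S
    simpa using this
  set hC : (X - A).IsHermitian := hX.sub hA with hhC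
  set km : Fin n := ⟨m - 1, by omega⟩ with hkm
  set c : ℝ := specVec hC km with hc
  have hX' : (X - c • 1).IsHermitian := hX.sub (isHermitian_smul_one c)
  have hC' : ((X - A) - c • 1).IsHermitian := hC.sub (isHermitian_smul_one c)
  have hXs := spec_shift hX c hX'
  have hCs := spec_shift hC c hC'
  obtain ⟨P, hPH, hPC', hPpsd, hPtr⟩ := posPart_exists hC'
  set Y := A + P with hYdef
  have hY : Y.IsHermitian := hA.add hPH
  have w1 : ∀ k, specVec hX' k ≤ specVec hY k := by
    intro k
    apply weyl hX' hY
    have h : Y - (X - c • 1) = P - ((X - A) - c • 1) := by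
      rw [hYdef]; abel
    rw [h]; exact hPC'
  have w2 : ∀ k, specVec hA k ≤ specVec hY k := by
    intro k
    apply weyl hA hY
    have h : Y - A = P := by rw [hYdef]; abel
    rw [h]; exact hPpsd
  -- the sorted spectrum of C is antitone
  have hanti : Antitone (specVec hC) := dsort_antitone _
  -- Σ over S of (X - A) spectra differences
  have hmc : ((univ.filter (fun j : Fin n => (j : ℕ) < m))).card = m := filter_lt_card_eq m hmn
  have hsY : ∑ i, specVec hY i = Y.trace := by
    rw [trace_eq_sum_eigs hY]; exact sum_dsort _
  have hsA : ∑ i, specVec hA i = A.trace := by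
    rw [trace_eq_sum_eigs hA]; exact sum_dsort _
  calc ∑ i ∈ S, (specVec hX i - specVec hA i)
      = ∑ i ∈ S, ((specVec hX' i - specVec hA i) + c) := by
        apply Finset.sum_congr rfl
        intro i _
        simp only [hXs]
        ring
    _ = (∑ i ∈ S, (specVec hX' i - specVec hA i)) + (m : ℝ) * c := by
        rw [Finset.sum_add_distrib, Finset.sum_const, nsmul_eq_mul]
    _ ≤ (∑ i ∈ S, (specVec hY i - specVec hA i)) + (m : ℝ) * c := by
        apply add_le_add_left
        exact Finset.sum_le_sum fun i _ => sub_le_sub_right (w1 i) _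
    _ ≤ (∑ i ∈ univ, (specVec hY i - specVec hA i)) + (m : ℝ) * c := by
        apply add_le_add_left
        apply Finset.sum_le_sum_of_subset_of_nonneg (Finset.subset_univ S)
        intro i _ _
        exact sub_nonneg.mpr (w2 i)
    _ = (∑ i, max (hC'.eigenvalues i) 0) + (m : ℝ) * c := by
        rw [Finset.sum_sub_distrib, hsY, hsA]
        have hYtr : Y.trace = A.trace + P.trace := by rw [hYdef, Matrix.trace_add]
        rw [hYtr, hPtr]
        ring
    _ = (∑ i, max (specVec hC' i) 0) + (m : ℝ) * c := by
        congr 1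
        exact (Equiv.sum_comp (Tuple.sort fun i => -hC'.eigenvalues i)
          (fun i => max (hC'.eigenvalues i) 0)).symm
    _ ≤ (∑ j ∈ univ.filter (fun j : Fin n => (j : ℕ) < m), (specVec hC j - c))
          + (m : ℝ) * c := by
        apply add_le_add_left
        simp only [hCs]
        rw [← Finset.sum_filter_add_sum_filter_not univ (fun j : Fin n => (j : ℕ) < m)
          (fun j => max (specVec hC j - c) 0)]
        have h1 : ∑ j ∈ univ.filter (fun j : Fin n => (j : ℕ) < m), max (specVec hC j - c) 0
            ≤ ∑ j ∈ univ.filter (fun j : Fin n => (j : ℕ) < m), (specVec hC j - c) := by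
          apply Finset.sum_le_sum
          intro j hj
          have hjm : (j : ℕ) < m := (Finset.mem_filter.mp hj).2
          have hle : j ≤ km := by
            rw [Fin.le_def]
            show (j : ℕ) ≤ m - 1
            omega
          exact max_le le_rfl (sub_nonneg.mpr (hanti hle))
        have h2 : ∑ j ∈ univ.filter (fun j : Fin n => ¬ (j : ℕ) < m),
            max (specVec hC j - c) 0 ≤ 0 := by
          apply Finset.sum_nonpos
          intro j hj
          have hjm : ¬ (j : ℕ) < m := (Finset.mem_filter.mp hj).2
          have hle : km ≤ j := by
            rw [Fin.le_def]
            show m - 1 ≤ (j : ℕ)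
            omega
          exact max_le (sub_nonpos.mpr (hanti hle)) le_rfl
        linarith [h1, h2]
    _ = ∑ j ∈ univ.filter (fun j : Fin n => (j : ℕ) < m), specVec hC j := by
        rw [Finset.sum_sub_distrib, Finset.sum_const, hmc, nsmul_eq_mul]
        ring

end SpecAux

theorem stmt12 {n : ℕ} {A B Xbar : Matrix (Fin n) (Fin n) ℝ}
    (hA : A.IsHermitian) (hB : B.IsHermitian) (hXbar : Xbar.IsHermitian)
    (f : (Fin n → ℝ) → ℝ)
    (hsymm : ∀ (σ : Equiv.Perm (Fin n)) (u : Fin n → ℝ), f (u ∘ σ) = f u)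
    (hschur : ∀ u v : Fin n → ℝ, Maj u v → f u ≤ f v)
    (hspec : specVec hXbar = specVec hB)
    (hcomm : StrongCommute hA hXbar) :
    ∀ (X : Matrix (Fin n) (Fin n) ℝ) (hX : X.IsHermitian), specVec hX = specVec hB →
      f (specVec (hXbar.sub hA)) ≤ f (specVec (hX.sub hA)) := by
  intro X hX hXB
  obtain ⟨U, hU, hUA, hUXbar⟩ := hcomm
  have reconstruct : ∀ (M : Matrix (Fin n) (Fin n) ℝ) (w : Fin n → ℝ),
      Uᵀ * M * U = Matrix.diagonal w → M = U * Matrix.diagonal w * Uᵀ := by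
    intro M w h
    calc M = (U * Uᵀ) * M * (U * Uᵀ) := by rw [hU, Matrix.one_mul, Matrix.mul_one]
      _ = U * (Uᵀ * M * U) * Uᵀ := by simp only [Matrix.mul_assoc]
      _ = U * Matrix.diagonal w * Uᵀ := by rw [h]
  have hArec := reconstruct A _ hUA
  have hXbarrec := reconstruct Xbar _ hUXbar
  set d : Fin n → ℝ := fun i => specVec hX i - specVec hA i with hd
  have hXbspec : specVec hXbar = specVec hX := by rw [hspec, hXB]
  have hdiff : Xbar - A = U * Matrix.diagonal d * Uᵀ := by
    conv_lhs => rw [hXbarrec, hArec]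
    rw [← Matrix.sub_mul, ← Matrix.mul_sub, Matrix.diagonal_sub]
    rw [hd]
    simp only [hXbspec]
  have hu : specVec (hXbar.sub hA) = dsort d := SpecAux.specVec_conj _ U d hU hdiff
  have hmaj : Maj (specVec (hXbar.sub hA)) (specVec (hX.sub hA)) := by
    constructor
    · intro k
      set σd := Tuple.sort (fun i => -d i) with hσ
      have hds_u : dsort (specVec (hXbar.sub hA)) = dsort d := by
        rw [hu]
        exact SpecAux.dsort_dsort d
      have hds_v : dsort (specVec (hX.sub hA)) = specVec (hX.sub hA) :=
        SpecAux.dsort_dsort (hX.sub hA).eigenvalues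
      rw [hds_u, hds_v]
      set Sk := (univ.filter (fun j : Fin n => (j : ℕ) < k)).image σd with hSk
      have hcard : Sk.card = (univ.filter (fun j : Fin n => (j : ℕ) < k)).card :=
        Finset.card_image_of_injective _ σd.injective
      have hsum : ∑ j ∈ univ.filter (fun j : Fin n => (j : ℕ) < k), dsort d j
          = ∑ i ∈ Sk, d i := by
        rw [hSk, Finset.sum_image (fun a _ b _ h => σd.injective h)]
        rfl
      have core := SpecAux.lidskii_core hA hX Sk
      rw [hcard, SpecAux.filter_lt_card_filter k] at core
      rw [hsum]
      exact core
    · have h1 : ∑ i, specVec (hXbar.sub hA) i = (Xbar - A).trace := by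
        rw [SpecAux.trace_eq_sum_eigs (hXbar.sub hA)]
        exact SpecAux.sum_dsort _
      have h2 : ∑ i, specVec (hX.sub hA) i = (X - A).trace := by
        rw [SpecAux.trace_eq_sum_eigs (hX.sub hA)]
        exact SpecAux.sum_dsort _
      rw [h1, h2, Matrix.trace_sub, Matrix.trace_sub]
      have hXbar_tr : Xbar.trace = X.trace := by
        rw [SpecAux.trace_eq_sum_eigs hXbar, SpecAux.trace_eq_sum_eigs hX,
          ← SpecAux.sum_dsort hXbar.eigenvalues, ← SpecAux.sum_dsort hX.eigenvalues]
        exact Finset.sum_congr rfl fun i _ => congrFun hXbspec i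
      rw [hXbar_tr]
  exact hschur _ _ hmaj
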